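/- Let $k\ge 3$, let $G$ be a $k$-chromatic graph critical for the chromatic number, let $u\in V(G)$, and let $G_u\bowtie K_k$ be the graph obtained from the disjoint union of $G$ and $K_k$ by identifying $u$ with one vertex of $K_k$. Then for every edge $e$ of $G_u\bowtie K_k$ we have $\chi((G_u\bowtie K_k)-e)=k$ and $es_\chi((G_u\bowtie K_k)-e)=1$. -/

import Mathlib

open SimpleGraph

/-- The chromatic edge-stability number `esχ(G)`: the minimum number of edges whose
removal from `G` results in a spanning subgraph `G'` with `χ(G') = χ(G) - 1`. -/
noncomputable def esChi {V : Type} (G : SimpleGraph V) : ℕ :=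
  sInf {n : ℕ | ∃ F : Finset (Sym2 V), ↑F ⊆ G.edgeSet ∧ F.card = n ∧
    (G.deleteEdges ↑F).chromaticNumber + 1 = G.chromaticNumber}

/-- A graph is edge-stability critical if deleting any edge decreases `esχ`. -/
def EdgeStabilityCritical {V : Type} (G : SimpleGraph V) : Prop :=
  ∀ e ∈ G.edgeSet, esChi (G.deleteEdges {e}) < esChi G

/-- `G` is `(k, ℓ)`-critical: edge-stability critical with `χ(G) = k` and `esχ(G) = ℓ`. -/
def IsKLCritical {V : Type} (G : SimpleGraph V) (k ℓ : ℕ) : Prop :=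
  EdgeStabilityCritical G ∧ G.chromaticNumber = (k : ℕ∞) ∧ esChi G = ℓ

/-- `H` is an odd cycle subgraph of `G`: the subgraph of some odd-length cycle of `G`. -/
def IsOddCycleSubgraph {V : Type} (G : SimpleGraph V) (H : G.Subgraph) : Prop :=
  ∃ (u : V) (w : G.Walk u u), w.IsCycle ∧ Odd w.length ∧ w.toSubgraph = H

/-- `H` is a path subgraph of `G`: the subgraph of some path of `G`. -/
def IsPathSubgraph {V : Type} (G : SimpleGraph V) (H : G.Subgraph) : Prop :=
  ∃ (u v : V) (w : G.Walk u v), w.IsPath ∧ w.toSubgraph = H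

/-- `G_u ⋈ K_k`: the graph obtained from the disjoint union of `G` and the complete graph
`K_k` by identifying the vertex `u` of `G` with one vertex of `K_k`; the `k - 1` remaining
clique vertices are the `Sum.inr` vertices. -/
def bowtieClique {V : Type} (G : SimpleGraph V) (u : V) (k : ℕ) :
    SimpleGraph (V ⊕ Fin (k - 1)) where
  Adj x y :=
    match x, y with
    | Sum.inl a, Sum.inl b => G.Adj a b
    | Sum.inl a, Sum.inr _ => a = u
    | Sum.inr _, Sum.inl b => b = u
    | Sum.inr i, Sum.inr j => i ≠ j
  symm := by
    constructor
    rintro (a | i) (b | j) h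
    · exact G.symm.symm _ _ h
    · exact h
    · exact h
    · exact Ne.symm h
  loopless := by
    constructor
    rintro (a | i) h
    · exact G.loopless.irrefl a h
    · exact h rfl

noncomputable def mergeMap {n : ℕ} (i0 j0 : Fin (n+1)) (h : i0 ≠ j0) (t : Fin (n+1)) : Fin n :=
  (Fin.exists_succAbove_eq (x := if t = j0 then i0 else t) (y := j0)
    (by split_ifs with h'; exacts [h, h'])).choose

lemma mergeMap_spec {n : ℕ} (i0 j0 : Fin (n+1)) (h : i0 ≠ j0) (t : Fin (n+1)) :
    j0.succAbove (mergeMap i0 j0 h t) = if t = j0 then i0 else t :=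
  (Fin.exists_succAbove_eq (x := if t = j0 then i0 else t) (y := j0)
    (by split_ifs with h'; exacts [h, h'])).choose_spec

lemma chromNum_eq_of_colorable {W : Type} (H : SimpleGraph W) (n : ℕ)
    (h1 : H.Colorable (n+1)) (h2 : ¬ H.Colorable n) :
    H.chromaticNumber = ((n+1 : ℕ) : ℕ∞) := by
  refine le_antisymm h1.chromaticNumber_le ?_
  by_contra hlt
  push_neg at hlt
  have h3 : H.chromaticNumber ≤ (n : ℕ∞) := by
    have h4 : H.chromaticNumber < (n : ℕ∞) + 1 := by
      rw [show ((n : ℕ∞) + 1) = ((n+1 : ℕ) : ℕ∞) by push_cast; ring]; exact hlt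
    exact (ENat.lt_add_one_iff (by simp)).mp h4
  exact h2 (chromaticNumber_le_iff_colorable.mp h3)

lemma esChi_eq_one' {W : Type} (H : SimpleGraph W) (n : ℕ)
    (hH : H.chromaticNumber = (n : ℕ∞)) (f : Sym2 W) (hf : f ∈ H.edgeSet)
    (hdel : (H.deleteEdges {f}).chromaticNumber + 1 = (n : ℕ∞)) : esChi H = 1 := by
  have h1 : 1 ∈ {n' : ℕ | ∃ F : Finset (Sym2 W), ↑F ⊆ H.edgeSet ∧ F.card = n' ∧
      (H.deleteEdges ↑F).chromaticNumber + 1 = H.chromaticNumber} := by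
    refine ⟨{f}, ?_, Finset.card_singleton f, ?_⟩
    · rw [Finset.coe_singleton]; exact Set.singleton_subset_iff.mpr hf
    · rw [Finset.coe_singleton, hdel, hH]
  refine le_antisymm (Nat.sInf_le h1) ?_
  rw [Nat.one_le_iff_ne_zero]
  intro h0
  unfold esChi at h0
  rw [Nat.sInf_eq_zero] at h0
  rcases h0 with h0 | h0
  · obtain ⟨F, _, hcard, hχ⟩ := h0
    rw [Finset.card_eq_zero] at hcard
    subst hcard
    rw [Finset.coe_empty, deleteEdges_empty, hH] at hχ
    rw [show ((n : ℕ∞) + 1) = ((n+1 : ℕ) : ℕ∞) by push_cast; ring] at hχ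
    rw [Nat.cast_inj] at hχ
    omega
  · rw [h0] at h1
    exact h1

/-- Lower bound via the copy of `G` on `inl` vertices. -/
lemma bowtie_not_colorable_of_inl {V : Type} (G : SimpleGraph V) (u : V) (m : ℕ)
    (S : Set (Sym2 (V ⊕ Fin (m + 3 - 1)))) (T : Set (Sym2 V))
    (hS : ∀ a b : V, s(Sum.inl a, Sum.inl b) ∈ S → s(a, b) ∈ T) (n : ℕ)
    (h : ¬ (G.deleteEdges T).Colorable n) :
    ¬ ((bowtieClique G u (m+3)).deleteEdges S).Colorable n := by
  rintro ⟨C⟩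
  refine h ⟨Coloring.mk (fun v => C (Sum.inl v)) ?_⟩
  intro a b hab
  rw [deleteEdges_adj] at hab
  apply C.valid
  rw [deleteEdges_adj]
  exact ⟨hab.1, fun hmem => hab.2 (hS a b hmem)⟩

/-- Lower bound via the clique, when all deleted edges lie inside the `G` part. -/
lemma bowtie_not_colorable_clique {V : Type} (G : SimpleGraph V) (u : V) (m : ℕ)
    (S : Set (Sym2 (V ⊕ Fin (m + 3 - 1))))
    (hS : ∀ z ∈ S, ∃ a b : V, z = s(Sum.inl a, Sum.inl b)) :
    ¬ ((bowtieClique G u (m+3)).deleteEdges S).Colorable (m+2) := by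
  rintro ⟨C⟩
  have hSnr : ∀ (i : Fin (m + 3 - 1)) (x : V ⊕ Fin (m + 3 - 1)), s(Sum.inr i, x) ∉ S := by
    intro i x hmem
    obtain ⟨a, b, hab⟩ := hS _ hmem
    rw [Sym2.eq_iff] at hab
    rcases hab with ⟨h, -⟩ | ⟨h, -⟩ <;> exact absurd h (by simp)
  set g : Fin (m+3) → V ⊕ Fin (m + 3 - 1) := fun i =>
    if h : (i : ℕ) < m + 2 then Sum.inr ⟨(i : ℕ), h⟩ else Sum.inl u with hg
  have hadj : ∀ i j : Fin (m+3), i ≠ j →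
      ((bowtieClique G u (m+3)).deleteEdges S).Adj (g i) (g j) := by
    intro i j hij
    rcases Nat.lt_or_ge (i : ℕ) (m+2) with h1 | h1 <;>
      rcases Nat.lt_or_ge (j : ℕ) (m+2) with h2 | h2
    · have e1 : g i = Sum.inr ⟨(i : ℕ), h1⟩ := dif_pos h1
      have e2 : g j = Sum.inr ⟨(j : ℕ), h2⟩ := dif_pos h2
      rw [e1, e2, deleteEdges_adj]
      refine ⟨?_, hSnr _ _⟩
      show (⟨(i : ℕ), h1⟩ : Fin (m+2)) ≠ ⟨(j : ℕ), h2⟩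
      intro hv
      rw [Fin.mk.injEq] at hv
      exact hij (Fin.ext hv)
    · have e1 : g i = Sum.inr ⟨(i : ℕ), h1⟩ := dif_pos h1
      have e2 : g j = Sum.inl u := dif_neg (by omega)
      rw [e1, e2, deleteEdges_adj]
      exact ⟨rfl, hSnr _ _⟩
    · have e1 : g i = Sum.inl u := dif_neg (by omega)
      have e2 : g j = Sum.inr ⟨(j : ℕ), h2⟩ := dif_pos h2
      rw [e1, e2, deleteEdges_adj]
      refine ⟨rfl, ?_⟩
      rw [Sym2.eq_swap]
      exact hSnr _ _
    · exact absurd (Fin.ext (by have := i.isLt; have := j.isLt; omega : (i : ℕ) = j)) hij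
  have hinj : Function.Injective fun i => C (g i) := by
    intro i j h
    by_contra hne
    exact C.valid (hadj i j hne) h
  have hcard := Fintype.card_le_of_injective _ hinj
  simp only [Fintype.card_fin] at hcard
  omega

lemma bowtie_colorable {V : Type} (G : SimpleGraph V) (u : V) (m : ℕ)
    (hc : G.Colorable (m+3)) : (bowtieClique G u (m+3)).Colorable (m+3) := by
  obtain ⟨c⟩ := hc
  refine ⟨Coloring.mk (Sum.elim c (fun t : Fin (m + 3 - 1) => (c u).succAbove t)) ?_⟩
  rintro (a | s) (b | t) hab <;> simp only [Sum.elim_inl, Sum.elim_inr]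
  · exact c.valid hab
  · have h : a = u := hab
    subst h
    exact Fin.ne_succAbove _ _
  · have h : b = u := hab
    subst h
    exact Fin.succAbove_ne _ _
  · have hst : s ≠ t := hab
    exact fun h => hst (Fin.succAbove_right_injective h)

/-- `m+2`-colorability of the bowtie minus a set `S` containing an `inr`–`inr` edge. -/
lemma bowtie_colorable_A {V : Type} (G : SimpleGraph V) (u : V) (m : ℕ)
    (S : Set (Sym2 (V ⊕ Fin (m + 3 - 1)))) (i0 j0 : Fin (m + 2)) (hne : i0 ≠ j0)
    (hmem : s((Sum.inr i0 : V ⊕ Fin (m + 3 - 1)), Sum.inr j0) ∈ S)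
    (T : Set (Sym2 V))
    (hT : ∀ a b : V, s(Sum.inl a, Sum.inl b) ∉ S → s(a, b) ∉ T)
    (hc : (G.deleteEdges T).Colorable (m+2)) :
    ((bowtieClique G u (m+3)).deleteEdges S).Colorable (m+2) := by
  obtain ⟨c⟩ := hc
  refine ⟨Coloring.mk (Sum.elim c
    (fun t : Fin (m + 3 - 1) => (c u).succAbove (mergeMap i0 j0 hne t))) ?_⟩
  rintro (a | s) (b | t) hab <;> rw [deleteEdges_adj] at hab <;>
    simp only [Sum.elim_inl, Sum.elim_inr]
  · exact c.valid (by rw [deleteEdges_adj]; exact ⟨hab.1, hT a b hab.2⟩)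
  · have h : a = u := hab.1
    subst h
    exact Fin.ne_succAbove _ _
  · have h : b = u := hab.1
    subst h
    exact Fin.succAbove_ne _ _
  · intro hcol
    have h1 : mergeMap i0 j0 hne s = mergeMap i0 j0 hne t :=
      Fin.succAbove_right_injective hcol
    have h2 : (if s = j0 then i0 else s) = (if t = j0 then i0 else t) := by
      rw [← mergeMap_spec i0 j0 hne s, ← mergeMap_spec i0 j0 hne t, h1]
    have hst : s ≠ t := hab.1
    split_ifs at h2 with hs ht ht
    · exact hst (hs.trans ht.symm)
    · subst hs
      subst h2
      refine hab.2 ?_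
      rw [Sym2.eq_swap]
      exact hmem
    · subst ht
      subst h2
      exact hab.2 hmem
    · exact hst h2

/-- `m+2`-colorability of the bowtie minus a set `S` containing a `u`–`inr` edge. -/
lemma bowtie_colorable_C {V : Type} (G : SimpleGraph V) (u : V) (m : ℕ)
    (S : Set (Sym2 (V ⊕ Fin (m + 3 - 1)))) (i0 : Fin (m + 2))
    (hmem : s((Sum.inl u : V ⊕ Fin (m + 3 - 1)), Sum.inr i0) ∈ S)
    (T : Set (Sym2 V))
    (hT : ∀ a b : V, s(Sum.inl a, Sum.inl b) ∉ S → s(a, b) ∉ T)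
    (hc : (G.deleteEdges T).Colorable (m+2)) :
    ((bowtieClique G u (m+3)).deleteEdges S).Colorable (m+2) := by
  obtain ⟨c⟩ := hc
  obtain ⟨x, hx⟩ : ∃ x : Fin (m+2), x ≠ i0 := by
    rcases eq_or_ne i0 ⟨0, by omega⟩ with h | h
    · refine ⟨⟨1, by omega⟩, ?_⟩
      rw [h]
      intro hc'
      rw [Fin.mk.injEq] at hc'
      omega
    · exact ⟨⟨0, by omega⟩, fun hc' => h (hc'.symm)⟩
  refine ⟨Coloring.mk (Sum.elim c
    (fun t : Fin (m + 3 - 1) =>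
      if t = i0 then c u else (c u).succAbove (mergeMap x i0 hx t))) ?_⟩
  rintro (a | s) (b | t) hab <;> rw [deleteEdges_adj] at hab <;>
    simp only [Sum.elim_inl, Sum.elim_inr]
  · exact c.valid (by rw [deleteEdges_adj]; exact ⟨hab.1, hT a b hab.2⟩)
  · have h : a = u := hab.1
    subst h
    rcases eq_or_ne t i0 with h | h
    · subst h
      exact absurd hmem hab.2
    · rw [if_neg h]
      exact Fin.ne_succAbove _ _
  · have h : b = u := hab.1
    subst h
    rcases eq_or_ne s i0 with h | h
    · subst h
      refine absurd ?_ hab.2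
      rw [Sym2.eq_swap]
      exact hmem
    · rw [if_neg h]
      exact Fin.succAbove_ne _ _
  · have hst : s ≠ t := hab.1
    split_ifs with h1 h2 h2
    · exact absurd (h1.trans h2.symm) hst
    · exact Fin.ne_succAbove _ _
    · exact Fin.succAbove_ne _ _
    · intro hcol
      have hmm : mergeMap x i0 hx s = mergeMap x i0 hx t :=
        Fin.succAbove_right_injective hcol
      have h2' : (if s = i0 then x else s) = (if t = i0 then x else t) := by
        rw [← mergeMap_spec x i0 hx s, ← mergeMap_spec x i0 hx t, hmm]
      rw [if_neg h1, if_neg h2] at h2'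
      exact hst h2'

/-- If `k ≥ 3` and `G` is a `k`-chromatic graph (without isolated vertices) critical for
the chromatic number, then for every edge `e` of `G_u ⋈ K_k` the graph `(G_u ⋈ K_k) - e`
has chromatic number `k` and chromatic edge-stability number `1`. -/
theorem bowtie_deleteEdge {V : Type} [Fintype V] (G : SimpleGraph V) (u : V) (k : ℕ)
    (hk : 3 ≤ k) (hiso : ∀ v : V, ∃ w : V, G.Adj v w)
    (hchi : G.chromaticNumber = (k : ℕ∞))
    (hcrit : ∀ e ∈ G.edgeSet, (G.deleteEdges {e}).chromaticNumber + 1 = (k : ℕ∞)) :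
    ∀ e ∈ (bowtieClique G u k).edgeSet,
      ((bowtieClique G u k).deleteEdges {e}).chromaticNumber = (k : ℕ∞) ∧
      esChi ((bowtieClique G u k).deleteEdges {e}) = 1 := by
  obtain ⟨m, rfl⟩ : ∃ m, k = m + 3 := ⟨k - 3, by omega⟩
  have hGc : G.Colorable (m+3) := chromaticNumber_le_iff_colorable.mp (le_of_eq hchi)
  have hGnc : ¬ G.Colorable (m+2) := by
    intro h
    have h2 := h.chromaticNumber_le
    rw [hchi, Nat.cast_le] at h2
    omega
  have hBc : ∀ S, ((bowtieClique G u (m+3)).deleteEdges S).Colorable (m+3) :=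
    fun S => Colorable.mono_left (deleteEdges_le S) (bowtie_colorable G u m hGc)
  have hcrit' : ∀ e₀ ∈ G.edgeSet,
      (G.deleteEdges {e₀}).Colorable (m+2) ∧ ¬ (G.deleteEdges {e₀}).Colorable (m+1) := by
    intro e₀ he₀
    have h := hcrit e₀ he₀
    have hχ : (G.deleteEdges {e₀}).chromaticNumber = ((m+2 : ℕ) : ℕ∞) := by
      refine WithTop.add_right_cancel (show (1 : ℕ∞) ≠ ⊤ by simp) ?_
      exact h.trans (by push_cast; ring : ((m+3 : ℕ) : ℕ∞) = ((m+2 : ℕ) : ℕ∞) + 1)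
    constructor
    · exact chromaticNumber_le_iff_colorable.mp (le_of_eq hχ)
    · intro hcol
      have h2 := hcol.chromaticNumber_le
      rw [hχ, Nat.cast_le] at h2
      omega
  have key : ∀ (e f : Sym2 (V ⊕ Fin (m + 3 - 1))) (e₀ : Sym2 V), e₀ ∈ G.edgeSet →
      ((bowtieClique G u (m+3)).deleteEdges {e}).chromaticNumber = ((m+3 : ℕ) : ℕ∞) →
      f ∈ ((bowtieClique G u (m+3)).deleteEdges {e}).edgeSet →
      ((bowtieClique G u (m+3)).deleteEdges ({e} ∪ {f})).Colorable (m+2) →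
      (∀ a b : V, s(Sum.inl a, Sum.inl b) ∈ ({e} ∪ {f} : Set (Sym2 (V ⊕ Fin (m+3-1)))) →
        s(a, b) ∈ ({e₀} : Set (Sym2 V))) →
      esChi ((bowtieClique G u (m+3)).deleteEdges {e}) = 1 := by
    intro e f e₀ he₀ hχe hf hcol2 hS
    have hnc2 := bowtie_not_colorable_of_inl G u m ({e} ∪ {f}) {e₀} hS (m+1) (hcrit' e₀ he₀).2
    have hχ2 : ((bowtieClique G u (m+3)).deleteEdges ({e} ∪ {f})).chromaticNumber
        = ((m+2 : ℕ) : ℕ∞) := chromNum_eq_of_colorable _ (m+1) hcol2 hnc2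
    refine esChi_eq_one' _ (m+3) hχe f hf ?_
    rw [deleteEdges_deleteEdges, hχ2]
    push_cast
    ring
  -- the case of an edge meeting the top vertex of the clique
  have caseUR : ∀ i : Fin (m + 3 - 1),
      ((bowtieClique G u (m+3)).deleteEdges {s(Sum.inl u, Sum.inr i)}).chromaticNumber
        = ((m+3 : ℕ) : ℕ∞) ∧
      esChi ((bowtieClique G u (m+3)).deleteEdges {s(Sum.inl u, Sum.inr i)}) = 1 := by
    intro i
    have hχe : ((bowtieClique G u (m+3)).deleteEdges
        {s(Sum.inl u, Sum.inr i)}).chromaticNumber = ((m+3 : ℕ) : ℕ∞) := by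
      refine chromNum_eq_of_colorable _ (m+2) (hBc _) ?_
      refine bowtie_not_colorable_of_inl G u m _ ∅ ?_ (m+2)
        (by rw [deleteEdges_empty]; exact hGnc)
      intro a' b' hmem
      rw [Set.mem_singleton_iff, Sym2.eq_iff] at hmem
      rcases hmem with ⟨-, h⟩ | ⟨h, -⟩ <;> exact absurd h (by simp)
    refine ⟨hχe, ?_⟩
    obtain ⟨w, hw⟩ := hiso u
    have he₀ : s(u, w) ∈ G.edgeSet := hw
    refine key _ s(Sum.inl u, Sum.inl w) s(u, w) he₀ hχe ?_ ?_ ?_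
    · rw [mem_edgeSet, deleteEdges_adj]
      refine ⟨hw, ?_⟩
      rw [Set.mem_singleton_iff, Sym2.eq_iff]
      rintro (⟨-, h⟩ | ⟨h, -⟩) <;> exact absurd h (by simp)
    · refine bowtie_colorable_C G u m _ i (Set.mem_union_left _ rfl) {s(u, w)} ?_
        (hcrit' _ he₀).1
      intro a' b' hnmem hmem'
      apply hnmem
      rw [Set.mem_singleton_iff] at hmem'
      have h := congrArg (Sym2.map (Sum.inl : V → V ⊕ Fin (m + 3 - 1))) hmem'
      rw [Sym2.map_pair_eq, Sym2.map_pair_eq] at h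
      exact Set.mem_union_right _ h
    · intro a' b' hmem
      rcases hmem with hmem | hmem
      · rw [Set.mem_singleton_iff, Sym2.eq_iff] at hmem
        rcases hmem with ⟨-, h⟩ | ⟨h, -⟩ <;> exact absurd h (by simp)
      · rw [Set.mem_singleton_iff, Sym2.eq_iff] at hmem
        rw [Set.mem_singleton_iff, Sym2.eq_iff]
        rcases hmem with ⟨h1, h2⟩ | ⟨h1, h2⟩
        · exact Or.inl ⟨Sum.inl.inj h1, Sum.inl.inj h2⟩
        · exact Or.inr ⟨Sum.inl.inj h1, Sum.inl.inj h2⟩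
  intro e
  induction e using Sym2.ind with
  | _ x y =>
  intro he
  rw [mem_edgeSet] at he
  rcases x with a | i <;> rcases y with b | j
  · -- edge inside the copy of G
    have hadj : G.Adj a b := he
    have he₀ : s(a, b) ∈ G.edgeSet := hadj
    have hχe : ((bowtieClique G u (m+3)).deleteEdges
        {s(Sum.inl a, Sum.inl b)}).chromaticNumber = ((m+3 : ℕ) : ℕ∞) := by
      refine chromNum_eq_of_colorable _ (m+2) (hBc _) ?_
      refine bowtie_not_colorable_clique G u m _ ?_
      intro z hz
      rw [Set.mem_singleton_iff] at hz
      exact ⟨a, b, hz⟩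
    refine ⟨hχe, ?_⟩
    refine key _ s(Sum.inr ⟨0, by omega⟩, Sum.inr ⟨1, by omega⟩) s(a, b) he₀ hχe ?_ ?_ ?_
    · rw [mem_edgeSet, deleteEdges_adj]
      constructor
      · intro h
        rw [Fin.mk.injEq] at h
        omega
      · rw [Set.mem_singleton_iff, Sym2.eq_iff]
        rintro (⟨h, -⟩ | ⟨h, -⟩) <;> exact absurd h (by simp)
    · refine bowtie_colorable_A G u m _ ⟨0, by omega⟩ ⟨1, by omega⟩ ?_
        (Set.mem_union_right _ rfl) {s(a, b)} ?_ (hcrit' _ he₀).1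
      · intro h
        rw [Fin.mk.injEq] at h
        omega
      · intro a' b' hnmem hmem'
        apply hnmem
        rw [Set.mem_singleton_iff] at hmem'
        have h := congrArg (Sym2.map (Sum.inl : V → V ⊕ Fin (m + 3 - 1))) hmem'
        rw [Sym2.map_pair_eq, Sym2.map_pair_eq] at h
        exact Set.mem_union_left _ h
    · intro a' b' hmem
      rcases hmem with hmem | hmem
      · rw [Set.mem_singleton_iff, Sym2.eq_iff] at hmem
        rw [Set.mem_singleton_iff, Sym2.eq_iff]
        rcases hmem with ⟨h1, h2⟩ | ⟨h1, h2⟩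
        · exact Or.inl ⟨Sum.inl.inj h1, Sum.inl.inj h2⟩
        · exact Or.inr ⟨Sum.inl.inj h1, Sum.inl.inj h2⟩
      · rw [Set.mem_singleton_iff, Sym2.eq_iff] at hmem
        rcases hmem with ⟨h, -⟩ | ⟨h, -⟩ <;> exact absurd h (by simp)
  · -- edge from u to the clique
    have hau : a = u := he
    subst hau
    exact caseUR j
  · have hbu : b = u := he
    subst hbu
    rw [Sym2.eq_swap]
    exact caseUR i
  · -- edge inside the clique
    have hij : i ≠ j := he
    have hχe : ((bowtieClique G u (m+3)).deleteEdges
        {s(Sum.inr i, Sum.inr j)}).chromaticNumber = ((m+3 : ℕ) : ℕ∞) := by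
      refine chromNum_eq_of_colorable _ (m+2) (hBc _) ?_
      refine bowtie_not_colorable_of_inl G u m _ ∅ ?_ (m+2)
        (by rw [deleteEdges_empty]; exact hGnc)
      intro a' b' hmem
      rw [Set.mem_singleton_iff, Sym2.eq_iff] at hmem
      rcases hmem with ⟨h, -⟩ | ⟨h, -⟩ <;> exact absurd h (by simp)
    refine ⟨hχe, ?_⟩
    obtain ⟨w, hw⟩ := hiso u
    have he₀ : s(u, w) ∈ G.edgeSet := hw
    refine key _ s(Sum.inl u, Sum.inl w) s(u, w) he₀ hχe ?_ ?_ ?_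
    · rw [mem_edgeSet, deleteEdges_adj]
      refine ⟨hw, ?_⟩
      rw [Set.mem_singleton_iff, Sym2.eq_iff]
      rintro (⟨h, -⟩ | ⟨h, -⟩) <;> exact absurd h (by simp)
    · refine bowtie_colorable_A G u m _ i j hij (Set.mem_union_left _ rfl) {s(u, w)} ?_
        (hcrit' _ he₀).1
      intro a' b' hnmem hmem'
      apply hnmem
      rw [Set.mem_singleton_iff] at hmem'
      have h := congrArg (Sym2.map (Sum.inl : V → V ⊕ Fin (m + 3 - 1))) hmem'
      rw [Sym2.map_pair_eq, Sym2.map_pair_eq] at h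
      exact Set.mem_union_right _ h
    · intro a' b' hmem
      rcases hmem with hmem | hmem
      · rw [Set.mem_singleton_iff, Sym2.eq_iff] at hmem
        rcases hmem with ⟨h, -⟩ | ⟨h, -⟩ <;> exact absurd h (by simp)
      · rw [Set.mem_singleton_iff, Sym2.eq_iff] at hmem
        rw [Set.mem_singleton_iff, Sym2.eq_iff]
        rcases hmem with ⟨h1, h2⟩ | ⟨h1, h2⟩
        · exact Or.inl ⟨Sum.inl.inj h1, Sum.inl.inj h2⟩
        · exact Or.inr ⟨Sum.inl.inj h1, Sum.inl.inj h2⟩
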